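/- arXiv:2211.16787 — 2 statements merged into one kernel-verified Lean document; each statement's English description precedes it below -/
import Mathlib

section
/- Let n ≥ 5 and define maps X, Y on the grid {1,…,n} × {1,…,n+1} by X(x,y) = (n+1-y, x) if 1 ≤ y ≤ n and X(x,y) = (x,y) otherwise; Y(x,y) = (n+2-y, x+1) if 2 ≤ y ≤ n+1 and Y(x,y) = (x,y) otherwise. Let E be the belt, i.e., E = {(x,1) : 1 ≤ x ≤ n} ∪ {(n,y) : 2 ≤ y ≤ n} ∪ {(x,n+1) : 1 ≤ x ≤ n}. Then the image of E under the composition X∘Y²∘X∘Y⁻¹∘X⁻¹ (applied left to right: first X, then Y², then X, then Y⁻¹, then X⁻¹) intersects E in exactly the single square (n, n+1). -/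
/-- `X`: 90° counter-clockwise rotation of the left `n × n` block of the `n × (n+1)` board. -/
def Xrot (n : ℕ) (p : ℕ × ℕ) : ℕ × ℕ :=
  if 1 ≤ p.2 ∧ p.2 ≤ n then (n + 1 - p.2, p.1) else p

/-- `Y`: 90° counter-clockwise rotation of the right `n × n` block. -/
def Yrot (n : ℕ) (p : ℕ × ℕ) : ℕ × ℕ :=
  if 2 ≤ p.2 ∧ p.2 ≤ n + 1 then (n + 2 - p.2, p.1 + 1) else p

/-- `X⁻¹`: 90° clockwise rotation of the left block. -/
def XrotInv (n : ℕ) (p : ℕ × ℕ) : ℕ × ℕ :=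
  if 1 ≤ p.2 ∧ p.2 ≤ n then (p.2, n + 1 - p.1) else p

/-- `Y⁻¹`: 90° clockwise rotation of the right block. -/
def YrotInv (n : ℕ) (p : ℕ × ℕ) : ℕ × ℕ :=
  if 2 ≤ p.2 ∧ p.2 ≤ n + 1 then (p.2 - 1, n + 2 - p.1) else p

/-- The belt `E` of the `n × (n+1)` board: leftmost column, bottom row, rightmost column. -/
def belt (n : ℕ) : Set (ℕ × ℕ) :=
  {p | (1 ≤ p.1 ∧ p.1 ≤ n ∧ p.2 = 1) ∨ (p.1 = n ∧ 2 ≤ p.2 ∧ p.2 ≤ n) ∨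
       (1 ≤ p.1 ∧ p.1 ≤ n ∧ p.2 = n + 1)}

lemma Xrot_eq (n a b c d : ℕ) (h : (1 ≤ b ∧ b ≤ n) → (n + 1 - b = c ∧ a = d))
    (h' : ¬(1 ≤ b ∧ b ≤ n) → (a = c ∧ b = d)) : Xrot n (a, b) = (c, d) := by
  simp only [Xrot]; split_ifs with hc
  · simp only [Prod.mk.injEq]; exact h hc
  · simp only [Prod.mk.injEq]; exact h' hc

lemma Yrot_eq (n a b c d : ℕ) (h : (2 ≤ b ∧ b ≤ n + 1) → (n + 2 - b = c ∧ a + 1 = d))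
    (h' : ¬(2 ≤ b ∧ b ≤ n + 1) → (a = c ∧ b = d)) : Yrot n (a, b) = (c, d) := by
  simp only [Yrot]; split_ifs with hc
  · simp only [Prod.mk.injEq]; exact h hc
  · simp only [Prod.mk.injEq]; exact h' hc

lemma XrotInv_eq (n a b c d : ℕ) (h : (1 ≤ b ∧ b ≤ n) → (b = c ∧ n + 1 - a = d))
    (h' : ¬(1 ≤ b ∧ b ≤ n) → (a = c ∧ b = d)) : XrotInv n (a, b) = (c, d) := by
  simp only [XrotInv]; split_ifs with hc
  · simp only [Prod.mk.injEq]; exact h hc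
  · simp only [Prod.mk.injEq]; exact h' hc

lemma YrotInv_eq (n a b c d : ℕ) (h : (2 ≤ b ∧ b ≤ n + 1) → (b - 1 = c ∧ n + 2 - a = d))
    (h' : ¬(2 ≤ b ∧ b ≤ n + 1) → (a = c ∧ b = d)) : YrotInv n (a, b) = (c, d) := by
  simp only [YrotInv]; split_ifs with hc
  · simp only [Prod.mk.injEq]; exact h hc
  · simp only [Prod.mk.injEq]; exact h' hc

/-- For `n ≥ 5`, the image of the belt under the algorithm `A = X Y² X Y⁻¹ X⁻¹`
(applied left to right) intersects the belt in exactly the single square `(n, n+1)`. -/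
theorem image_belt_inter_belt (n : ℕ) (hn : 5 ≤ n) :
    ((fun p => XrotInv n (YrotInv n (Xrot n (Yrot n (Yrot n (Xrot n p)))))) '' belt n)
      ∩ belt n = {(n, n + 1)} := by
  ext p
  simp only [Set.mem_inter_iff, Set.mem_image, Set.mem_singleton_iff]
  constructor
  · rintro ⟨⟨⟨x, y⟩, hq, rfl⟩, hp⟩
    simp only [belt, Set.mem_setOf_eq] at hq hp
    show XrotInv n (YrotInv n (Xrot n (Yrot n (Yrot n (Xrot n (x, y)))))) = (n, n + 1)
    rcases hq with ⟨hx1, hx2, hy⟩ | ⟨hx, hy1, hy2⟩ | ⟨hx1, hx2, hy⟩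
    · -- bottom row: y = 1
      subst hy
      by_cases hx : x = 1
      · subst hx
        have e : XrotInv n (YrotInv n (Xrot n (Yrot n (Yrot n (Xrot n (1, 1)))))) = (2, 2) := by
          rw [Xrot_eq n 1 1 n 1 (by omega) (by omega),
              Yrot_eq n n 1 n 1 (by omega) (by omega),
              Yrot_eq n n 1 n 1 (by omega) (by omega),
              Xrot_eq n n 1 n n (by omega) (by omega),
              YrotInv_eq n n n (n - 1) 2 (by omega) (by omega),
              XrotInv_eq n (n - 1) 2 2 2 (by omega) (by omega)]
        rw [e] at hp; exact absurd hp (by simp; omega)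
      · by_cases hx' : x = 2
        · subst hx'
          have e : XrotInv n (YrotInv n (Xrot n (Yrot n (Yrot n (Xrot n (2, 1)))))) =
              (n, n + 1) := by
            rw [Xrot_eq n 2 1 n 2 (by omega) (by omega),
                Yrot_eq n n 2 n (n + 1) (by omega) (by omega),
                Yrot_eq n n (n + 1) 1 (n + 1) (by omega) (by omega),
                Xrot_eq n 1 (n + 1) 1 (n + 1) (by omega) (by omega),
                YrotInv_eq n 1 (n + 1) n (n + 1) (by omega) (by omega),
                XrotInv_eq n n (n + 1) n (n + 1) (by omega) (by omega)]
          exact e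
        · -- x ≥ 3
          have e : XrotInv n (YrotInv n (Xrot n (Yrot n (Yrot n (Xrot n (x, 1)))))) =
              (1, n + 3 - x) := by
            rw [Xrot_eq n x 1 n x (by omega) (by omega),
                Yrot_eq n n x (n + 2 - x) (n + 1) (by omega) (by omega),
                Yrot_eq n (n + 2 - x) (n + 1) 1 (n + 3 - x) (by omega) (by omega),
                Xrot_eq n 1 (n + 3 - x) (x - 2) 1 (by omega) (by omega),
                YrotInv_eq n (x - 2) 1 (x - 2) 1 (by omega) (by omega),
                XrotInv_eq n (x - 2) 1 1 (n + 3 - x) (by omega) (by omega)]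
          rw [e] at hp; exact absurd hp (by simp; omega)
    · -- right column: x = n, 2 ≤ y ≤ n
      have e : XrotInv n (YrotInv n (Xrot n (Yrot n (Yrot n (Xrot n (x, y)))))) =
          (4, n + 2 - y) := by
        rw [Xrot_eq n x y (n + 1 - y) n (by omega) (by omega),
            Yrot_eq n (n + 1 - y) n 2 (n + 2 - y) (by omega) (by omega),
            Yrot_eq n 2 (n + 2 - y) y 3 (by omega) (by omega),
            Xrot_eq n y 3 (n - 2) y (by omega) (by omega),
            YrotInv_eq n (n - 2) y (y - 1) 4 (by omega) (by omega),
            XrotInv_eq n (y - 1) 4 4 (n + 2 - y) (by omega) (by omega)]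
      rw [e] at hp; exact absurd hp (by simp; omega)
    · -- top row: y = n + 1
      subst hy
      by_cases hx : x = n
      · have e : XrotInv n (YrotInv n (Xrot n (Yrot n (Yrot n (Xrot n (x, n + 1)))))) =
            (1, 2) := by
          rw [Xrot_eq n x (n + 1) x (n + 1) (by omega) (by omega),
              Yrot_eq n x (n + 1) 1 (x + 1) (by omega) (by omega),
              Yrot_eq n 1 (x + 1) 1 2 (by omega) (by omega),
              Xrot_eq n 1 2 (n - 1) 1 (by omega) (by omega),
              YrotInv_eq n (n - 1) 1 (n - 1) 1 (by omega) (by omega),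
              XrotInv_eq n (n - 1) 1 1 2 (by omega) (by omega)]
        rw [e] at hp; exact absurd hp (by simp; omega)
      · -- x ≤ n - 1
        have e : XrotInv n (YrotInv n (Xrot n (Yrot n (Yrot n (Xrot n (x, n + 1)))))) =
            (3, x + 1) := by
          rw [Xrot_eq n x (n + 1) x (n + 1) (by omega) (by omega),
              Yrot_eq n x (n + 1) 1 (x + 1) (by omega) (by omega),
              Yrot_eq n 1 (x + 1) (n + 1 - x) 2 (by omega) (by omega),
              Xrot_eq n (n + 1 - x) 2 (n - 1) (n + 1 - x) (by omega) (by omega),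
              YrotInv_eq n (n - 1) (n + 1 - x) (n - x) 3 (by omega) (by omega),
              XrotInv_eq n (n - x) 3 3 (x + 1) (by omega) (by omega)]
        rw [e] at hp; exact absurd hp (by simp; omega)
  · rintro rfl
    refine ⟨⟨(2, 1), by simp [belt]; omega, ?_⟩, by simp [belt]; omega⟩
    show XrotInv n (YrotInv n (Xrot n (Yrot n (Yrot n (Xrot n (2, 1)))))) = (n, n + 1)
    rw [Xrot_eq n 2 1 n 2 (by omega) (by omega),
        Yrot_eq n n 2 n (n + 1) (by omega) (by omega),
        Yrot_eq n n (n + 1) 1 (n + 1) (by omega) (by omega),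
        Xrot_eq n 1 (n + 1) 1 (n + 1) (by omega) (by omega),
        YrotInv_eq n 1 (n + 1) n (n + 1) (by omega) (by omega),
        XrotInv_eq n n (n + 1) n (n + 1) (by omega) (by omega)]
end

section
/- Let n ≥ 4 be even and define X, Y on {1,…,n} × {1,…,n+1} as the rotation maps X(x,y) = (n+1-y, x) for 1 ≤ y ≤ n (identity otherwise) and Y(x,y) = (n+2-y, x+1) for 2 ≤ y ≤ n+1 (identity otherwise). Then the composition X, Y², X⁻¹, Y⁻¹, X, Y⁻¹, X⁻¹ (applied in that order) fixes both (1,1) and (2,1), and maps the set E = {(x,1) : 3 ≤ x ≤ n} to {(x,3) : 3 ≤ x ≤ n}, which is disjoint from E. -/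
lemma step5_key (n : ℕ) (hn : 4 ≤ n) (x : ℕ) (h3 : 3 ≤ x) (hx : x ≤ n) :
    XrotInv n (YrotInv n (Xrot n (YrotInv n (XrotInv n (Yrot n (Yrot n (Xrot n (x, 1)))))))) =
      (x, 3) := by
  have s0 : Xrot n (x, 1) = (n, x) := by
    simp only [Xrot, Yrot, XrotInv, YrotInv]; split_ifs with h <;> simp only [Prod.mk.injEq, and_true, true_and] <;> omega
  have s1 : Yrot n (n, x) = (n + 2 - x, n + 1) := by
    simp only [Xrot, Yrot, XrotInv, YrotInv]; split_ifs with h <;> simp only [Prod.mk.injEq, and_true, true_and] <;> omega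
  have s2 : Yrot n (n + 2 - x, n + 1) = (1, n + 3 - x) := by
    simp only [Xrot, Yrot, XrotInv, YrotInv]; split_ifs with h <;> simp only [Prod.mk.injEq, and_true, true_and] <;> omega
  have s3 : XrotInv n (1, n + 3 - x) = (n + 3 - x, n) := by
    simp only [Xrot, Yrot, XrotInv, YrotInv]; split_ifs with h <;> simp only [Prod.mk.injEq, and_true, true_and] <;> omega
  have s4 : YrotInv n (n + 3 - x, n) = (n - 1, x - 1) := by
    simp only [Xrot, Yrot, XrotInv, YrotInv]; split_ifs with h <;> simp only [Prod.mk.injEq, and_true, true_and] <;> omega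
  have s5 : Xrot n (n - 1, x - 1) = (n + 2 - x, n - 1) := by
    simp only [Xrot, Yrot, XrotInv, YrotInv]; split_ifs with h <;> simp only [Prod.mk.injEq, and_true, true_and] <;> omega
  have s6 : YrotInv n (n + 2 - x, n - 1) = (n - 2, x) := by
    simp only [Xrot, Yrot, XrotInv, YrotInv]; split_ifs with h <;> simp only [Prod.mk.injEq, and_true, true_and] <;> omega
  have s7 : XrotInv n (n - 2, x) = (x, 3) := by
    simp only [Xrot, Yrot, XrotInv, YrotInv]; split_ifs with h <;> simp only [Prod.mk.injEq, and_true, true_and] <;> omega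
  rw [s0, s1, s2, s3, s4, s5, s6, s7]

/-- Step 5 (even case) of the spiral-cycle algorithm: for even `n ≥ 4`, the algorithm
`X Y² X⁻¹ Y⁻¹ X Y⁻¹ X⁻¹` (applied in that order) fixes `(1,1)` and `(2,1)`, and maps
the set `E = {(x,1) : 3 ≤ x ≤ n}` onto `{(x,3) : 3 ≤ x ≤ n}`, which is disjoint
from `E`. -/
theorem spiral_cycle_step5_even (n : ℕ) (hn : 4 ≤ n) (hev : Even n) :
    letI g : ℕ × ℕ → ℕ × ℕ := fun p =>
      XrotInv n (YrotInv n (Xrot n (YrotInv n (XrotInv n (Yrot n (Yrot n (Xrot n p)))))))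
    g (1, 1) = (1, 1) ∧ g (2, 1) = (2, 1) ∧
    g '' {p : ℕ × ℕ | 3 ≤ p.1 ∧ p.1 ≤ n ∧ p.2 = 1} =
      {p : ℕ × ℕ | 3 ≤ p.1 ∧ p.1 ≤ n ∧ p.2 = 3} ∧
    Disjoint ({p : ℕ × ℕ | 3 ≤ p.1 ∧ p.1 ≤ n ∧ p.2 = 3})
      ({p : ℕ × ℕ | 3 ≤ p.1 ∧ p.1 ≤ n ∧ p.2 = 1}) := by
  refine ⟨?_, ?_, ?_, ?_⟩
  · show XrotInv n (YrotInv n (Xrot n (YrotInv n (XrotInv n (Yrot n (Yrot n (Xrot n (1, 1)))))))) = (1, 1)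
    have s0 : Xrot n (1, 1) = (n, 1) := by
      simp only [Xrot, Yrot, XrotInv, YrotInv]; split_ifs with h <;> simp only [Prod.mk.injEq, and_true, true_and] <;> omega
    have s1 : Yrot n (n, 1) = (n, 1) := by
      simp only [Xrot, Yrot, XrotInv, YrotInv]; split_ifs with h <;> simp only [Prod.mk.injEq, and_true, true_and] <;> omega
    have s2 : XrotInv n (n, 1) = (1, 1) := by
      simp only [Xrot, Yrot, XrotInv, YrotInv]; split_ifs with h <;> simp only [Prod.mk.injEq, and_true, true_and] <;> omega
    have s3 : YrotInv n (1, 1) = (1, 1) := by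
      simp only [Xrot, Yrot, XrotInv, YrotInv]; split_ifs with h <;> simp only [Prod.mk.injEq, and_true, true_and] <;> omega
    have s4 : YrotInv n (n, 1) = (n, 1) := by
      simp only [Xrot, Yrot, XrotInv, YrotInv]; split_ifs with h <;> simp only [Prod.mk.injEq, and_true, true_and] <;> omega
    rw [s0, s1, s1, s2, s3, s0, s4, s2]
  · show XrotInv n (YrotInv n (Xrot n (YrotInv n (XrotInv n (Yrot n (Yrot n (Xrot n (2, 1)))))))) = (2, 1)
    have s0 : Xrot n (2, 1) = (n, 2) := by
      simp only [Xrot, Yrot, XrotInv, YrotInv]; split_ifs with h <;> simp only [Prod.mk.injEq, and_true, true_and] <;> omega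
    have s1 : Yrot n (n, 2) = (n, n + 1) := by
      simp only [Xrot, Yrot, XrotInv, YrotInv]; split_ifs with h <;> simp only [Prod.mk.injEq, and_true, true_and] <;> omega
    have s2 : Yrot n (n, n + 1) = (1, n + 1) := by
      simp only [Xrot, Yrot, XrotInv, YrotInv]; split_ifs with h <;> simp only [Prod.mk.injEq, and_true, true_and] <;> omega
    have s3 : XrotInv n (1, n + 1) = (1, n + 1) := by
      simp only [Xrot, Yrot, XrotInv, YrotInv]; split_ifs with h <;> simp only [Prod.mk.injEq, and_true, true_and] <;> omega
    have s4 : YrotInv n (1, n + 1) = (n, n + 1) := by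
      simp only [Xrot, Yrot, XrotInv, YrotInv]; split_ifs with h <;> simp only [Prod.mk.injEq, and_true, true_and] <;> omega
    have s5 : Xrot n (n, n + 1) = (n, n + 1) := by
      simp only [Xrot, Yrot, XrotInv, YrotInv]; split_ifs with h <;> simp only [Prod.mk.injEq, and_true, true_and] <;> omega
    have s6 : YrotInv n (n, n + 1) = (n, 2) := by
      simp only [Xrot, Yrot, XrotInv, YrotInv]; split_ifs with h <;> simp only [Prod.mk.injEq, and_true, true_and] <;> omega
    have s7 : XrotInv n (n, 2) = (2, 1) := by
      simp only [Xrot, Yrot, XrotInv, YrotInv]; split_ifs with h <;> simp only [Prod.mk.injEq, and_true, true_and] <;> omega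
    rw [s0, s1, s2, s3, s4, s5, s6, s7]
  · ext ⟨a, b⟩
    simp only [Set.mem_image, Set.mem_setOf_eq]
    constructor
    · rintro ⟨⟨x, y⟩, ⟨h3, hx, hy⟩, hg⟩
      simp only at h3 hx hy
      subst hy
      rw [step5_key n hn x h3 hx] at hg
      cases hg
      exact ⟨h3, hx, rfl⟩
    · rintro ⟨h3, hx, rfl⟩
      exact ⟨(a, 1), ⟨h3, hx, rfl⟩, step5_key n hn a h3 hx⟩
  · rw [Set.disjoint_left]
    rintro ⟨a, b⟩ ⟨_, _, rfl⟩ ⟨_, _, h⟩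
    omega
end
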